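/- With the weighted-graph setup below, let k', k'' : F → ℝ be two maps with k' f > 0 and k'' f > 0 for all f, and let k := fun f ↦ max (k' f) (k'' f) be their pointwise maximum. Then for every f ∈ F, Ttot k f ≤ max (Ttot k' f) (Ttot k'' f). In particular, if T̂ : F → ℝ and both Ttot k' ≤ T̂ and Ttot k'' ≤ T̂ pointwise, then Ttot k ≤ T̂ pointwise; that is, the subpattern set 𝒦₁ = { k > 0 | Ttot k ≤ T̂ pointwise } is closed under pointwise maximum (the net property of the Perron family). -/
import Mathlib


open Real Filter Finset

/-- Total geodesic curvature of the arc of the first circle bounding the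
intersection bigon of two spherical disks with boundary geodesic curvatures
`a`, `b` intersecting at interior angle `θ`. -/
noncomputable def T (a b θ : ℝ) : ℝ :=
  (2 * a / Real.sqrt (a ^ 2 + 1)) *
    Real.arctan (Real.sin θ * Real.sqrt (a ^ 2 + 1) / (b + a * Real.cos θ))

/-- Total geodesic curvature of the boundary circle of the disk of the face `f`,
for the weighted graph with edge-to-faces map `ε`, weights `θ`, and geodesic
curvature vector `k`. -/
noncomputable def Ttot {F E : Type*} [Fintype E] [DecidableEq F]
    (ε : E → F × F) (θ : E → ℝ) (k : F → ℝ) (f : F) : ℝ :=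
  ∑ e : E,
    ((if (ε e).1 = f then T (k f) (k (ε e).2) (θ e) else 0) +
     (if (ε e).2 = f then T (k f) (k (ε e).1) (θ e) else 0))

/-- `T a b θ` is antitone in `b`. -/
lemma T_anti {a b b' θ : ℝ} (ha : 0 < a) (hb : 0 < b) (hbb : b ≤ b')
    (hθ1 : 0 < θ) (hθ2 : θ ≤ Real.pi / 2) : T a b' θ ≤ T a b θ := by
  have hs : 0 < Real.sqrt (a ^ 2 + 1) := Real.sqrt_pos.mpr (by positivity)
  have hsin : 0 ≤ Real.sin θ := Real.sin_nonneg_of_nonneg_of_le_pi hθ1.le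
    (hθ2.trans (by linarith [Real.pi_pos]))
  have hcos : 0 ≤ Real.cos θ := Real.cos_nonneg_of_mem_Icc
    ⟨by linarith, hθ2⟩
  have hden : 0 < b + a * Real.cos θ := by positivity
  have hc : 0 ≤ 2 * a / Real.sqrt (a ^ 2 + 1) := by positivity
  unfold T
  apply mul_le_mul_of_nonneg_left _ hc
  apply Real.arctan_strictMono.monotone
  gcongr

lemma Ttot_anti {F E : Type*} [Fintype E] [DecidableEq F]
    (ε : E → F × F) (θ : E → ℝ) (hθ : ∀ e, 0 < θ e ∧ θ e ≤ Real.pi / 2)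
    (c k : F → ℝ) (hc : ∀ g, 0 < c g) (hck : ∀ g, c g ≤ k g) (f : F)
    (hf : k f = c f) : Ttot ε θ k f ≤ Ttot ε θ c f := by
  unfold Ttot
  apply Finset.sum_le_sum
  intro e _
  have h1 : ∀ g, T (k f) (k g) (θ e) ≤ T (c f) (c g) (θ e) := by
    intro g
    rw [hf]
    exact T_anti (hc f) (hc g) (hck g) (hθ e).1 (hθ e).2
  gcongr <;> split_ifs <;> first | exact h1 _ | exact le_rfl

theorem stmt_13 {F E : Type*} [Fintype F] [Fintype E] [Nonempty F] [DecidableEq F]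
    (ε : E → F × F) (θ : E → ℝ) (hθ : ∀ e, 0 < θ e ∧ θ e ≤ Real.pi / 2)
    (hadj : ∀ f : F, ∃ e : E, (ε e).1 = f ∨ (ε e).2 = f)
    (k' k'' : F → ℝ) (hk' : ∀ f, 0 < k' f) (hk'' : ∀ f, 0 < k'' f) :
    (∀ f, Ttot ε θ (fun g => max (k' g) (k'' g)) f ≤
      max (Ttot ε θ k' f) (Ttot ε θ k'' f)) ∧
    (∀ That : F → ℝ, (∀ f, Ttot ε θ k' f ≤ That f) →
      (∀ f, Ttot ε θ k'' f ≤ That f) →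
      ∀ f, Ttot ε θ (fun g => max (k' g) (k'' g)) f ≤ That f) := by
  have main : ∀ f, Ttot ε θ (fun g => max (k' g) (k'' g)) f ≤
      max (Ttot ε θ k' f) (Ttot ε θ k'' f) := by
    intro f
    rcases le_total (k' f) (k'' f) with h | h
    · refine le_max_of_le_right ?_
      exact Ttot_anti ε θ hθ k'' _ hk'' (fun g => le_max_right _ _) f
        (max_eq_right h)
    · refine le_max_of_le_left ?_
      exact Ttot_anti ε θ hθ k' _ hk' (fun g => le_max_left _ _) f
        (max_eq_left h)
  exact ⟨main, fun That h1 h2 f =>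
    (main f).trans (max_le (h1 f) (h2 f))⟩
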